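/- Let U : ℝ^d → ℝ be C² with U(r) ≥ U_min for all r, let b : ℝ^d → ℝ^{d'} satisfy |b(r)| ≤ B for all r, and let A : ℝ^d → ℝ^{d'×d'} be C¹ with symmetric values satisfying vᵀA(r)v ≥ c|v|² for all r, v, where c > 0. Let ε > 0 and let (r_ε, x_ε) be a C² solution on [0,t_f] of the XLMD system r̈_ε = −∇U(r_ε) − ∇_r Q(r_ε, x_ε), ε·ẍ_ε = b(r_ε) − A(r_ε)x_ε, with initial extended energy E₀ = ½|ṙ_ε(0)|² + (ε/2)|ẋ_ε(0)|² + U(r_ε(0)) + Q(r_ε(0), x_ε(0)). Then for all t ∈ [0,t_f]: ½|ṙ_ε(t)|² ≤ E₀ − U_min + B²/(2c), (ε/2)|ẋ_ε(t)|² ≤ E₀ − U_min + B²/(2c), and |x_ε(t)| ≤ (B + √(B² + 2c(E₀ − U_min)))/c. -/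

import Mathlib

/- A priori bounds for the XLMD dynamics from conservation of the extended energy. -/

open scoped RealInnerProductSpace
open Set

set_option maxHeartbeats 1000000

noncomputable section

attribute [local instance] Matrix.normedAddCommGroup Matrix.normedSpace

/-- The interaction energy `Q(r,x) = ½ xᵀA(r)x − b(r)ᵀx`. -/
noncomputable def Qfun {d n : ℕ}
    (A : EuclideanSpace ℝ (Fin d) → Matrix (Fin n) (Fin n) ℝ)
    (b : EuclideanSpace ℝ (Fin d) → EuclideanSpace ℝ (Fin n))
    (r : EuclideanSpace ℝ (Fin d)) (x : EuclideanSpace ℝ (Fin n)) : ℝ :=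
  (1/2) * ⟪x, (Matrix.toEuclideanLin (A r)) x⟫ - ⟪b r, x⟫

/-- The gradient in `r` of `Q(r,x) = ½ xᵀA(r)x − b(r)ᵀx`; its `k`-th component is
`½ xᵀ(∂A/∂r_k)(r)x − (∂b/∂r_k)(r)ᵀx`. -/
noncomputable def gradQ {d n : ℕ}
    (A : EuclideanSpace ℝ (Fin d) → Matrix (Fin n) (Fin n) ℝ)
    (b : EuclideanSpace ℝ (Fin d) → EuclideanSpace ℝ (Fin n))
    (r : EuclideanSpace ℝ (Fin d)) (x : EuclideanSpace ℝ (Fin n)) :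
    EuclideanSpace ℝ (Fin d) :=
  (EuclideanSpace.equiv (Fin d) ℝ).symm fun k =>
    (1/2) * ⟪x, (Matrix.toEuclideanLin (fderiv ℝ A r (EuclideanSpace.single k 1))) x⟫
      - ⟪fderiv ℝ b r (EuclideanSpace.single k 1), x⟫

/-- Matrices to continuous linear maps on Euclidean space, as a continuous linear map. -/
noncomputable def TLaux (n : ℕ) :
    Matrix (Fin n) (Fin n) ℝ →L[ℝ] (EuclideanSpace ℝ (Fin n) →L[ℝ] EuclideanSpace ℝ (Fin n)) :=
  LinearMap.toContinuousLinearMap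
  { toFun := fun M => LinearMap.toContinuousLinearMap (Matrix.toEuclideanLin M)
    map_add' := by intro M N; ext x; simp
    map_smul' := by intro c M; ext x; simp }

@[simp] lemma TLaux_apply {n : ℕ} (M : Matrix (Fin n) (Fin n) ℝ) (x : EuclideanSpace ℝ (Fin n)) :
    TLaux n M x = Matrix.toEuclideanLin M x := rfl

lemma inner_gradQ {d n : ℕ}
    (A : EuclideanSpace ℝ (Fin d) → Matrix (Fin n) (Fin n) ℝ)
    (b : EuclideanSpace ℝ (Fin d) → EuclideanSpace ℝ (Fin n))
    (r : EuclideanSpace ℝ (Fin d)) (x : EuclideanSpace ℝ (Fin n))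
    (v : EuclideanSpace ℝ (Fin d)) :
    ⟪gradQ A b r x, v⟫ =
      (1/2) * ⟪x, (Matrix.toEuclideanLin (fderiv ℝ A r v)) x⟫ - ⟪fderiv ℝ b r v, x⟫ := by
  have hv : v = ∑ k, v k • EuclideanSpace.single k 1 := by
    ext i; rw [WithLp.ofLp_sum, Finset.sum_apply]; simp [EuclideanSpace.single_apply]
  conv_rhs => rw [hv]
  rw [map_sum, map_sum, map_sum]
  simp only [map_smul]
  rw [LinearMap.coe_sum, Finset.sum_apply, inner_sum]
  simp only [LinearMap.smul_apply, real_inner_smul_right, real_inner_smul_left, Finset.smul_sum]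
  rw [sum_inner, Finset.mul_sum, ← Finset.sum_sub_distrib]
  rw [PiLp.inner_apply]
  apply Finset.sum_congr rfl
  intro k _
  simp only [real_inner_smul_left, RCLike.inner_apply, conj_trivial]
  rw [gradQ]
  have happ : ∀ f : Fin d → ℝ, ((EuclideanSpace.equiv (Fin d) ℝ).symm f) k = f k :=
    fun _ => rfl
  rw [happ]
  ring

theorem xlmd_apriori_bounds_from_energy
    (d n : ℕ) (hd : 1 ≤ d) (hn : 1 ≤ n)
    (tf : ℝ) (htf : 0 < tf)
    (U : EuclideanSpace ℝ (Fin d) → ℝ) (hU : ContDiff ℝ 2 U)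
    (Umin : ℝ) (hUbd : ∀ r, Umin ≤ U r)
    (b : EuclideanSpace ℝ (Fin d) → EuclideanSpace ℝ (Fin n))
    (B : ℝ) (hbbd : ∀ r, ‖b r‖ ≤ B)
    (A : EuclideanSpace ℝ (Fin d) → Matrix (Fin n) (Fin n) ℝ)
    (hA : ContDiff ℝ 1 A) (hb : ContDiff ℝ 1 b)
    (hAsymm : ∀ r, (A r).IsSymm)
    (c : ℝ) (hc : 0 < c)
    (hApos : ∀ (r : EuclideanSpace ℝ (Fin d)) (v : EuclideanSpace ℝ (Fin n)),
      c * ‖v‖ ^ 2 ≤ ⟪v, (Matrix.toEuclideanLin (A r)) v⟫)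
    (ε : ℝ) (hε : 0 < ε)
    -- (rε, xε) is a C² solution of the XLMD system on [0, t_f]
    (re : ℝ → EuclideanSpace ℝ (Fin d)) (xe : ℝ → EuclideanSpace ℝ (Fin n))
    (hre : ContDiff ℝ 2 re) (hxe : ContDiff ℝ 2 xe)
    (hode1 : ∀ t ∈ Icc (0:ℝ) tf,
      deriv (deriv re) t = -gradient U (re t) - gradQ A b (re t) (xe t))
    (hode2 : ∀ t ∈ Icc (0:ℝ) tf,
      ε • deriv (deriv xe) t
        = b (re t) - (Matrix.toEuclideanLin (A (re t))) (xe t))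
    -- the initial extended energy
    (E₀ : ℝ)
    (hE₀ : E₀ = (1/2) * ‖deriv re 0‖ ^ 2 + (ε/2) * ‖deriv xe 0‖ ^ 2
        + U (re 0) + Qfun A b (re 0) (xe 0)) :
    ∀ t ∈ Icc (0:ℝ) tf,
      (1/2) * ‖deriv re t‖ ^ 2 ≤ E₀ - Umin + B ^ 2 / (2 * c) ∧
      (ε/2) * ‖deriv xe t‖ ^ 2 ≤ E₀ - Umin + B ^ 2 / (2 * c) ∧
      ‖xe t‖ ≤ (B + Real.sqrt (B ^ 2 + 2 * c * (E₀ - Umin))) / c := by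
  -- differentiability facts
  have hre2 : ContDiff ℝ (1+1) re := by norm_num; exact hre
  have hxe2 : ContDiff ℝ (1+1) xe := by norm_num; exact hxe
  have hreD : Differentiable ℝ re := hre.differentiable two_ne_zero
  have hxeD : Differentiable ℝ xe := hxe.differentiable two_ne_zero
  have hre' : ContDiff ℝ 1 (deriv re) := (contDiff_succ_iff_deriv.mp hre2).2.2
  have hxe' : ContDiff ℝ 1 (deriv xe) := (contDiff_succ_iff_deriv.mp hxe2).2.2
  have hre'D : Differentiable ℝ (deriv re) := hre'.differentiable one_ne_zero
  have hxe'D : Differentiable ℝ (deriv xe) := hxe'.differentiable one_ne_zero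
  have hUD : Differentiable ℝ U := hU.differentiable two_ne_zero
  have hAD : Differentiable ℝ A := hA.differentiable one_ne_zero
  have hbD : Differentiable ℝ b := hb.differentiable one_ne_zero
  -- the extended energy
  set E : ℝ → ℝ := fun s =>
    (1/2) * ⟪deriv re s, deriv re s⟫ + (ε/2) * ⟪deriv xe s, deriv xe s⟫
      + U (re s) + ((1/2) * ⟪xe s, TLaux n (A (re s)) (xe s)⟫ - ⟪b (re s), xe s⟫) with hEdef
  have hEval : ∀ s, E s = (1/2) * ‖deriv re s‖ ^ 2 + (ε/2) * ‖deriv xe s‖ ^ 2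
      + U (re s) + Qfun A b (re s) (xe s) := by
    intro s
    rw [hEdef]
    simp only [real_inner_self_eq_norm_sq, TLaux_apply, Qfun]
  -- derivative of the energy
  have hEderiv : ∀ t : ℝ, HasDerivAt E (
      (1/2) * (⟪deriv re t, deriv (deriv re) t⟫ + ⟪deriv (deriv re) t, deriv re t⟫)
      + (ε/2) * (⟪deriv xe t, deriv (deriv xe) t⟫ + ⟪deriv (deriv xe) t, deriv xe t⟫)
      + fderiv ℝ U (re t) (deriv re t)
      + ((1/2) * (⟪xe t, TLaux n (fderiv ℝ A (re t) (deriv re t)) (xe t)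
            + TLaux n (A (re t)) (deriv xe t)⟫
          + ⟪deriv xe t, TLaux n (A (re t)) (xe t)⟫)
        - (⟪b (re t), deriv xe t⟫ + ⟪fderiv ℝ b (re t) (deriv re t), xe t⟫))) t := by
    intro t
    have hdr : HasDerivAt re (deriv re t) t := (hreD t).hasDerivAt
    have hdx : HasDerivAt xe (deriv xe t) t := (hxeD t).hasDerivAt
    have hddr : HasDerivAt (deriv re) (deriv (deriv re) t) t := (hre'D t).hasDerivAt
    have hddx : HasDerivAt (deriv xe) (deriv (deriv xe) t) t := (hxe'D t).hasDerivAt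
    have h1 : HasDerivAt (fun s => ⟪deriv re s, deriv re s⟫)
        (⟪deriv re t, deriv (deriv re) t⟫ + ⟪deriv (deriv re) t, deriv re t⟫) t :=
      hddr.inner ℝ hddr
    have h2 : HasDerivAt (fun s => ⟪deriv xe s, deriv xe s⟫)
        (⟪deriv xe t, deriv (deriv xe) t⟫ + ⟪deriv (deriv xe) t, deriv xe t⟫) t :=
      hddx.inner ℝ hddx
    have h3 : HasDerivAt (fun s => U (re s)) (fderiv ℝ U (re t) (deriv re t)) t :=
      (hUD (re t)).hasFDerivAt.comp_hasDerivAt t hdr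
    have hAre : HasDerivAt (fun s => A (re s)) (fderiv ℝ A (re t) (deriv re t)) t :=
      (hAD (re t)).hasFDerivAt.comp_hasDerivAt t hdr
    have hφ : HasDerivAt (fun s => TLaux n (A (re s)))
        (TLaux n (fderiv ℝ A (re t) (deriv re t))) t :=
      (TLaux n).hasFDerivAt.comp_hasDerivAt t hAre
    have hg : HasDerivAt (fun s => TLaux n (A (re s)) (xe s))
        (TLaux n (fderiv ℝ A (re t) (deriv re t)) (xe t)
          + TLaux n (A (re t)) (deriv xe t)) t := hφ.clm_apply hdx
    have h4 : HasDerivAt (fun s => ⟪xe s, TLaux n (A (re s)) (xe s)⟫)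
        (⟪xe t, TLaux n (fderiv ℝ A (re t) (deriv re t)) (xe t)
            + TLaux n (A (re t)) (deriv xe t)⟫
          + ⟪deriv xe t, TLaux n (A (re t)) (xe t)⟫) t := hdx.inner ℝ hg
    have hbre : HasDerivAt (fun s => b (re s)) (fderiv ℝ b (re t) (deriv re t)) t :=
      (hbD (re t)).hasFDerivAt.comp_hasDerivAt t hdr
    have h5 : HasDerivAt (fun s => ⟪b (re s), xe s⟫)
        (⟪b (re t), deriv xe t⟫ + ⟪fderiv ℝ b (re t) (deriv re t), xe t⟫) t :=
      hbre.inner ℝ hdx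
    exact (((h1.const_mul (1/2)).add (h2.const_mul (ε/2))).add h3).add
      ((h4.const_mul (1/2)).sub h5)
  -- on [0, tf] the derivative vanishes
  have hzero : ∀ t ∈ Icc (0:ℝ) tf, HasDerivAt E 0 t := by
    intro t ht
    refine (hEderiv t).congr_deriv ?_
    have hsym : ∀ u v : EuclideanSpace ℝ (Fin n),
        ⟪Matrix.toEuclideanLin (A (re t)) u, v⟫ = ⟪u, Matrix.toEuclideanLin (A (re t)) v⟫ := by
      have hherm : (A (re t)).IsHermitian := by
        rw [Matrix.IsHermitian, Matrix.conjTranspose_eq_transpose_of_trivial]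
        exact hAsymm (re t)
      exact Matrix.isHermitian_iff_isSymmetric.mp hherm
    have hodeq1 := hode1 t ht
    have hodeq2 := hode2 t ht
    have e1 : ⟪deriv re t, deriv (deriv re) t⟫
        = -⟪gradient U (re t), deriv re t⟫ - ⟪gradQ A b (re t) (xe t), deriv re t⟫ := by
      rw [real_inner_comm, hodeq1, inner_sub_left, inner_neg_left]
    have e2 : ⟪deriv (deriv re) t, deriv re t⟫
        = -⟪gradient U (re t), deriv re t⟫ - ⟪gradQ A b (re t) (xe t), deriv re t⟫ := by
      rw [hodeq1, inner_sub_left, inner_neg_left]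
    have egrad : fderiv ℝ U (re t) (deriv re t) = ⟪gradient U (re t), deriv re t⟫ := by
      rw [gradient, InnerProductSpace.toDual_symm_apply]
    have egradQ : ⟪gradQ A b (re t) (xe t), deriv re t⟫
        = (1/2) * ⟪xe t, Matrix.toEuclideanLin (fderiv ℝ A (re t) (deriv re t)) (xe t)⟫
          - ⟪fderiv ℝ b (re t) (deriv re t), xe t⟫ := inner_gradQ A b _ _ _
    have e3 : ε * ⟪deriv (deriv xe) t, deriv xe t⟫
        = ⟪b (re t), deriv xe t⟫ - ⟪Matrix.toEuclideanLin (A (re t)) (xe t), deriv xe t⟫ := by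
      rw [← real_inner_smul_left, hodeq2, inner_sub_left]
    have e4 : ε * ⟪deriv xe t, deriv (deriv xe) t⟫
        = ⟪b (re t), deriv xe t⟫ - ⟪Matrix.toEuclideanLin (A (re t)) (xe t), deriv xe t⟫ := by
      rw [real_inner_comm]; exact e3
    have e34 : (ε/2) * (⟪deriv xe t, deriv (deriv xe) t⟫ + ⟪deriv (deriv xe) t, deriv xe t⟫)
        = ⟪b (re t), deriv xe t⟫ - ⟪Matrix.toEuclideanLin (A (re t)) (xe t), deriv xe t⟫ := by
      linear_combination (1/2) * e3 + (1/2) * e4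
    have e5 : ⟪xe t, Matrix.toEuclideanLin (A (re t)) (deriv xe t)⟫
        = ⟪Matrix.toEuclideanLin (A (re t)) (xe t), deriv xe t⟫ :=
      (hsym (xe t) (deriv xe t)).symm
    have e6 : ⟪deriv xe t, Matrix.toEuclideanLin (A (re t)) (xe t)⟫
        = ⟪Matrix.toEuclideanLin (A (re t)) (xe t), deriv xe t⟫ := real_inner_comm _ _
    simp only [TLaux_apply]
    rw [inner_add_right, e1, e2, egrad, e5, e6]
    linarith [e34, egradQ]
  -- energy conservation
  have hcontE : Continuous E :=
    continuous_iff_continuousAt.mpr fun t => (hEderiv t).continuousAt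
  have hconst : ∀ t ∈ Icc (0:ℝ) tf, E t = E 0 :=
    constant_of_has_deriv_right_zero hcontE.continuousOn
      (fun y hy => (hzero y ⟨hy.1, hy.2.le⟩).hasDerivWithinAt)
  -- lower bound on Q
  have hB0 : 0 ≤ B := le_trans (norm_nonneg _) (hbbd 0)
  have hQlow : ∀ r x, (c/2) * ‖x‖ ^ 2 - B * ‖x‖ ≤ Qfun A b r x := by
    intro r x
    have h1 := hApos r x
    have h2 : ⟪b r, x⟫ ≤ B * ‖x‖ :=
      (real_inner_le_norm _ _).trans (mul_le_mul_of_nonneg_right (hbbd r) (norm_nonneg x))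
    rw [Qfun]; linarith
  intro t ht
  have hEt : (1/2) * ‖deriv re t‖ ^ 2 + (ε/2) * ‖deriv xe t‖ ^ 2
      + U (re t) + Qfun A b (re t) (xe t) = E₀ := by
    rw [← hEval t, hconst t ht, hEval 0, hE₀]
  have hU1 : Umin ≤ U (re t) := hUbd (re t)
  have hr0 : (0:ℝ) ≤ ‖deriv re t‖ ^ 2 := sq_nonneg _
  have hx0 : (0:ℝ) ≤ ‖deriv xe t‖ ^ 2 := sq_nonneg _
  have hy0 : (0:ℝ) ≤ ‖xe t‖ := norm_nonneg _
  have hQ1 := hQlow (re t) (xe t)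
  have hQ2 : -(B ^ 2 / (2 * c)) ≤ Qfun A b (re t) (xe t) := by
    have hiden : c/2 * ‖xe t‖ ^ 2 - B * ‖xe t‖ + B ^ 2 / (2 * c)
        = (c * ‖xe t‖ - B) ^ 2 / (2 * c) := by
      field_simp; ring
    have hpos : (0:ℝ) ≤ (c * ‖xe t‖ - B) ^ 2 / (2 * c) := by positivity
    linarith
  refine ⟨by nlinarith, by nlinarith, ?_⟩
  -- the bound on ‖xe t‖
  set y := ‖xe t‖ with hy
  have hq : c * y ^ 2 - 2 * B * y - 2 * (E₀ - Umin) ≤ 0 := by nlinarith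
  have harg : 0 ≤ B ^ 2 + 2 * c * (E₀ - Umin) := by nlinarith [sq_nonneg (c * y - B)]
  set s := Real.sqrt (B ^ 2 + 2 * c * (E₀ - Umin)) with hs
  have hs0 : 0 ≤ s := Real.sqrt_nonneg _
  have hs2 : s ^ 2 = B ^ 2 + 2 * c * (E₀ - Umin) := Real.sq_sqrt harg
  rw [le_div_iff₀ hc]
  nlinarith [sq_nonneg (c * y - B), sq_nonneg (s + (c * y - B)), sq_nonneg (s - (c * y - B))]

end
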